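/- Let Ē_{k,h}(s,a) := Clip[E_{k,h}(s,a) | ε] be the clipped surplus with threshold ε, and define the clipped value functions V̈^{π*} backward via the Bellman recursion with reward r − Ē_{k,h}. Then for any optimal policy π*, V̈^{π*}_{k,h}(s_h) ≤ V̂_{k,h}(s_h) + (H−h+1)·ε ≤ V_h^{π^PVI_k}(s_h) + (H−h+1)·ε, assuming the underestimation property V̂_{k,h} ≤ V^{π^PVI_k}_h holds. -/

import Mathlib

open Finset MeasureTheory Classical
open scoped Classical

/-- A finite-horizon tabular MDP with horizon `H`, fixed initial state `s0`,
time-dependent transition kernel `P` and deterministic rewards `r` in `[0,1]`.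
Steps are indexed `1, …, H` (so value functions live on `1, …, H+1`). -/
structure TabMDP (S A : Type) [Fintype S] [Fintype A] where
  H : ℕ
  s0 : S
  P : ℕ → S → A → S → ℝ
  r : ℕ → S → A → ℝ
  P_nonneg : ∀ h s a s', 0 ≤ P h s a s'
  P_sum_one : ∀ h s a, ∑ s', P h s a s' = 1
  r_nonneg : ∀ h s a, 0 ≤ r h s a
  r_le_one : ∀ h s a, r h s a ≤ 1

namespace TabMDP

variable {S A : Type} [Fintype S] [Nonempty S] [Fintype A] [Nonempty A]

/-- Value function of a deterministic policy, computed with `n` remaining steps starting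
at step `h`: `Vfuel M π n h s = E_π[∑_{h'=h}^{h+n-1} r(s_{h'},a_{h'}) | s_h = s]`. -/
noncomputable def Vfuel (M : TabMDP S A) (π : ℕ → S → A) : ℕ → ℕ → S → ℝ
  | 0, _, _ => 0
  | n + 1, h, s =>
      M.r h s (π h s) + ∑ s', M.P h s (π h s) s' * Vfuel M π n (h + 1) s'

/-- `V M π h s = V^π_h(s)`, for `1 ≤ h ≤ H+1`. -/
noncomputable def V (M : TabMDP S A) (π : ℕ → S → A) (h : ℕ) (s : S) : ℝ :=
  Vfuel M π (M.H + 1 - h) h s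

/-- Q-function of a deterministic policy. -/
noncomputable def Q (M : TabMDP S A) (π : ℕ → S → A) (h : ℕ) (s : S) (a : A) : ℝ :=
  M.r h s a + ∑ s', M.P h s a s' * V M π (h + 1) s'

/-- Optimal value function with `n` remaining steps. -/
noncomputable def VstarFuel (M : TabMDP S A) : ℕ → ℕ → S → ℝ
  | 0, _, _ => 0
  | n + 1, h, s =>
      ⨆ a : A, (M.r h s a + ∑ s', M.P h s a s' * VstarFuel M n (h + 1) s')

/-- `Vstar M h s = V^*_h(s)`. -/
noncomputable def Vstar (M : TabMDP S A) (h : ℕ) (s : S) : ℝ :=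
  VstarFuel M (M.H + 1 - h) h s

/-- Optimal Q-function `Q^*_h(s,a)`. -/
noncomputable def Qstar (M : TabMDP S A) (h : ℕ) (s : S) (a : A) : ℝ :=
  M.r h s a + ∑ s', M.P h s a s' * Vstar M (h + 1) s'

/-- Suboptimality gap `Δ_h(s,a) = V^*_h(s) - Q^*_h(s,a)`. -/
noncomputable def gap (M : TabMDP S A) (h : ℕ) (s : S) (a : A) : ℝ :=
  Vstar M h s - Qstar M h s a

/-- A deterministic policy is optimal if it achieves the optimal value at the initial state. -/
def IsOptimal (M : TabMDP S A) (π : ℕ → S → A) : Prop :=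
  V M π 1 M.s0 = Vstar M 1 M.s0

/-- State occupancy `d^π(s_h) = Pr(S_h = s_h | S_1 = s0, π)`, for `1 ≤ h ≤ H`. -/
noncomputable def stateOcc (M : TabMDP S A) (π : ℕ → S → A) : ℕ → S → ℝ
  | 0 => fun _ => 0
  | 1 => fun s => if s = M.s0 then 1 else 0
  | h + 2 => fun s' => ∑ s, stateOcc M π (h + 1) s * M.P (h + 1) s (π (h + 1) s) s'

/-- State-action occupancy `d^π(s_h, a_h)` of a deterministic policy. -/
noncomputable def occ (M : TabMDP S A) (π : ℕ → S → A) (h : ℕ) (s : S) (a : A) : ℝ :=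
  if π h s = a then stateOcc M π h s else 0

/-- Expected sum of a per-step function along trajectories of `π` started at `(h,s)` with
`n` remaining steps: `pathSum M π g n h s = E_π[∑_{h'=h}^{h+n-1} g(h', s_{h'}, a_{h'}) | s_h = s]`. -/
noncomputable def pathSum (M : TabMDP S A) (π : ℕ → S → A) (g : ℕ → S → A → ℝ) :
    ℕ → ℕ → S → ℝ
  | 0, _, _ => 0
  | n + 1, h, s =>
      g h s (π h s) + ∑ s', M.P h s (π h s) s' * pathSum M π g n (h + 1) s'

/-- `E_{π_k}[∑_{h'} 𝟙[Ẽ_{h'}] g(h', s_{h'})]` where `Ẽ_{h'}` is the event that step `h'` is the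
first step along the trajectory (generated by `πk`) at which `πk(s_{h'}) ≠ π(s_{h'})`;
computed by the recursion that stops and pays `g h s` at the first disagreeing state. -/
noncomputable def firstDisagreeExp (M : TabMDP S A) (πk π : ℕ → S → A) (g : ℕ → S → ℝ) :
    ℕ → ℕ → S → ℝ
  | 0, _, _ => 0
  | n + 1, h, s =>
      if πk h s ≠ π h s then g h s
      else ∑ s', M.P h s (πk h s) s' * firstDisagreeExp M πk π g n (h + 1) s'

/-- Probability, under trajectories of `πk` started at `s0` at step 1, that `πk` disagrees
with `π` at some visited state within steps `1, …, H`. -/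
noncomputable def disagreeProb (M : TabMDP S A) (πk π : ℕ → S → A) : ℝ :=
  firstDisagreeExp M πk π (fun _ _ => 1) M.H 1 M.s0

/-! ### Stochastic policies -/

/-- A stochastic policy `πs h s a` = probability of taking `a` at state `s`, step `h`. -/
def IsStochasticPolicy (πs : ℕ → S → A → ℝ) : Prop :=
  ∀ h s, (∀ a, 0 ≤ πs h s a) ∧ ∑ a, πs h s a = 1

/-- State occupancy of a stochastic policy. -/
noncomputable def stateOccS (M : TabMDP S A) (πs : ℕ → S → A → ℝ) : ℕ → S → ℝ
  | 0 => fun _ => 0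
  | 1 => fun s => if s = M.s0 then 1 else 0
  | h + 2 => fun s' =>
      ∑ s, ∑ a, stateOccS M πs (h + 1) s * πs (h + 1) s a * M.P (h + 1) s a s'

/-- State-action occupancy of a stochastic policy. -/
noncomputable def occS (M : TabMDP S A) (πs : ℕ → S → A → ℝ) (h : ℕ) (s : S) (a : A) : ℝ :=
  stateOccS M πs h s * πs h s a

/-- Value function of a stochastic policy (with fuel). -/
noncomputable def VSfuel (M : TabMDP S A) (πs : ℕ → S → A → ℝ) : ℕ → ℕ → S → ℝ
  | 0, _, _ => 0
  | n + 1, h, s =>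
      ∑ a, πs h s a * (M.r h s a + ∑ s', M.P h s a s' * VSfuel M πs n (h + 1) s')

/-- Value of a stochastic policy. -/
noncomputable def VS (M : TabMDP S A) (πs : ℕ → S → A → ℝ) (h : ℕ) (s : S) : ℝ :=
  VSfuel M πs (M.H + 1 - h) h s

/-- A stochastic policy is optimal if it achieves the optimal value at the initial state. -/
def IsOptimalS (M : TabMDP S A) (πs : ℕ → S → A → ℝ) : Prop :=
  VS M πs 1 M.s0 = Vstar M 1 M.s0

/-- `d^*_{h,min}(s_h,a_h)`: the minimal positive occupancy of `(s_h,a_h)` over deterministic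
optimal policies that reach `(s_h, a_h)`. -/
noncomputable def dhmin (M : TabMDP S A) (h : ℕ) (s : S) (a : A) : ℝ :=
  sInf {x : ℝ | ∃ π : ℕ → S → A, IsOptimal M π ∧ occ M π h s a = x ∧ 0 < x}

/-- `Z_{h,div}`: state-action pairs whose state is reachable by some deterministic optimal
policy but unreachable by some other deterministic optimal policy. -/
def Zdiv (M : TabMDP S A) (h : ℕ) : Set (S × A) :=
  {p | ∃ π π' : ℕ → S → A, IsOptimal M π ∧ IsOptimal M π' ∧
        0 < stateOcc M π h p.1 ∧ stateOcc M π' h p.1 = 0}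

/-! ### Pessimistic value iteration -/

/-- PVI pessimistic value estimate (with fuel), given the empirical model `Phat` and
bonus `b`:  `V̂_h(s) = max_a max{r(s,a) + P̂_h V̂_{h+1}(s,a) - b_h(s,a), 0}`. -/
noncomputable def VhatFuel (M : TabMDP S A) (Phat : ℕ → S → A → S → ℝ)
    (b : ℕ → S → A → ℝ) : ℕ → ℕ → S → ℝ
  | 0, _, _ => 0
  | n + 1, h, s =>
      ⨆ a : A,
        max (M.r h s a + (∑ s', Phat h s a s' * VhatFuel M Phat b n (h + 1) s') - b h s a) 0

/-- `V̂_h(s)`, the PVI pessimistic value estimate. -/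
noncomputable def Vhat (M : TabMDP S A) (Phat : ℕ → S → A → S → ℝ)
    (b : ℕ → S → A → ℝ) (h : ℕ) (s : S) : ℝ :=
  VhatFuel M Phat b (M.H + 1 - h) h s

/-- `Q̂_h(s,a) = max{r(s,a) + P̂_h V̂_{h+1}(s,a) - b_h(s,a), 0}`, the PVI pessimistic
Q estimate. -/
noncomputable def Qhat (M : TabMDP S A) (Phat : ℕ → S → A → S → ℝ)
    (b : ℕ → S → A → ℝ) (h : ℕ) (s : S) (a : A) : ℝ :=
  max (M.r h s a + (∑ s', Phat h s a s' * Vhat M Phat b (h + 1) s') - b h s a) 0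

/-- PVI surplus `E_h(s,a) := r(s,a) + P_h V̂_{h+1}(s,a) - Q̂_h(s,a)`. -/
noncomputable def surplus (M : TabMDP S A) (Phat : ℕ → S → A → S → ℝ)
    (b : ℕ → S → A → ℝ) (h : ℕ) (s : S) (a : A) : ℝ :=
  M.r h s a + (∑ s', M.P h s a s' * Vhat M Phat b (h + 1) s') - Qhat M Phat b h s a

/-- Value of a deterministic policy for the reward `r - Ebar` (clipped-surplus value `V̈`),
with fuel. -/
noncomputable def VclipFuel (M : TabMDP S A) (π : ℕ → S → A) (Ebar : ℕ → S → A → ℝ) :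
    ℕ → ℕ → S → ℝ
  | 0, _, _ => 0
  | n + 1, h, s =>
      (M.r h s (π h s) - Ebar h s (π h s)) +
        ∑ s', M.P h s (π h s) s' * VclipFuel M π Ebar n (h + 1) s'

/-- `V̈^π_h(s)`: value of `π` when the reward is reduced by `Ebar`. -/
noncomputable def Vclip (M : TabMDP S A) (π : ℕ → S → A) (Ebar : ℕ → S → A → ℝ)
    (h : ℕ) (s : S) : ℝ :=
  VclipFuel M π Ebar (M.H + 1 - h) h s

end TabMDP

/-- `Clip[x | ε] := x · 𝟙[x ≥ ε]`. -/
noncomputable def clip (x ε : ℝ) : ℝ := if ε ≤ x then x else 0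

/-- Clipped-value comparison.  Let `Ē_h(s,a) := Clip[E_h(s,a) | ε]` be the clipped PVI
surplus and let `V̈^{π*}` be the value of an optimal policy `π*` with reward `r − Ē`.  If the
underestimation property `V̂_h ≤ V_h^{π^PVI}` holds, then for all `h, s`:
`V̈^{π*}_h(s) ≤ V̂_h(s) + (H−h+1) ε ≤ V_h^{π^PVI}(s) + (H−h+1) ε`. -/

lemma vclip_aux
    {S A : Type} [Fintype S] [Nonempty S] [Fintype A] [Nonempty A]
    (M : TabMDP S A) (Phat : ℕ → S → A → S → ℝ) (b : ℕ → S → A → ℝ)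
    (πst : ℕ → S → A) (ε : ℝ) (hε : 0 ≤ ε) :
    ∀ n h s, h + n = M.H + 1 →
      TabMDP.VclipFuel M πst (fun h' s' a' => clip (TabMDP.surplus M Phat b h' s' a') ε) n h s ≤
        TabMDP.VhatFuel M Phat b n h s + n * ε := by
  intro n
  induction n with
  | zero => intro h s _; simp [TabMDP.VclipFuel, TabMDP.VhatFuel]
  | succ n ih =>
    intro h s hh
    have hh' : (h + 1) + n = M.H + 1 := by omega
    have hVhat : ∀ s', TabMDP.Vhat M Phat b (h + 1) s' = TabMDP.VhatFuel M Phat b n (h + 1) s' := by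
      intro s'
      unfold TabMDP.Vhat
      congr 1
      omega
    set a := πst h s with ha
    have hclip : TabMDP.surplus M Phat b h s a - ε ≤ clip (TabMDP.surplus M Phat b h s a) ε := by
      unfold clip
      split <;> [linarith; linarith [not_le.mp (by assumption)]]
    have hsum : ∑ s', M.P h s a s' *
          TabMDP.VclipFuel M πst (fun h' s' a' => clip (TabMDP.surplus M Phat b h' s' a') ε) n (h + 1) s'
        ≤ ∑ s', M.P h s a s' * (TabMDP.VhatFuel M Phat b n (h + 1) s' + n * ε) := by
      apply Finset.sum_le_sum
      intro s' _
      exact mul_le_mul_of_nonneg_left (ih (h + 1) s' hh') (M.P_nonneg h s a s')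
    have hsum2 : ∑ s', M.P h s a s' * (TabMDP.VhatFuel M Phat b n (h + 1) s' + n * ε)
        = (∑ s', M.P h s a s' * TabMDP.VhatFuel M Phat b n (h + 1) s') + n * ε := by
      simp only [mul_add]
      rw [Finset.sum_add_distrib, ← Finset.sum_mul, M.P_sum_one, one_mul]
    have hQle : TabMDP.Qhat M Phat b h s a ≤ TabMDP.VhatFuel M Phat b (n + 1) h s := by
      have : TabMDP.Qhat M Phat b h s a =
          max (M.r h s a + (∑ s', Phat h s a s' * TabMDP.VhatFuel M Phat b n (h + 1) s') - b h s a) 0 := by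
        unfold TabMDP.Qhat
        simp only [hVhat]
      rw [this]
      show _ ≤ ⨆ a' : A, max (M.r h s a' + (∑ s', Phat h s a' s' * TabMDP.VhatFuel M Phat b n (h + 1) s') - b h s a') 0
      exact le_ciSup (Set.Finite.bddAbove (Set.finite_range (fun a' : A =>
        max (M.r h s a' + (∑ s', Phat h s a' s' * TabMDP.VhatFuel M Phat b n (h + 1) s') - b h s a') 0))) a
    have hsurp : M.r h s a + (∑ s', M.P h s a s' * TabMDP.VhatFuel M Phat b n (h + 1) s')
        - TabMDP.surplus M Phat b h s a = TabMDP.Qhat M Phat b h s a := by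
      unfold TabMDP.surplus
      simp only [hVhat]
      ring
    show (M.r h s a - clip (TabMDP.surplus M Phat b h s a) ε) + ∑ s', M.P h s a s' *
        TabMDP.VclipFuel M πst (fun h' s' a' => clip (TabMDP.surplus M Phat b h' s' a') ε) n (h + 1) s'
        ≤ TabMDP.VhatFuel M Phat b (n + 1) h s + (n + 1 : ℕ) * ε
    push_cast
    calc (M.r h s a - clip (TabMDP.surplus M Phat b h s a) ε) + _
        ≤ (M.r h s a - (TabMDP.surplus M Phat b h s a - ε)) +
          ((∑ s', M.P h s a s' * TabMDP.VhatFuel M Phat b n (h + 1) s') + n * ε) := by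
          apply add_le_add (by linarith) (hsum.trans_eq hsum2)
      _ = (M.r h s a + (∑ s', M.P h s a s' * TabMDP.VhatFuel M Phat b n (h + 1) s')
            - TabMDP.surplus M Phat b h s a) + (n + 1) * ε := by ring
      _ ≤ TabMDP.VhatFuel M Phat b (n + 1) h s + (n + 1) * ε := by
          rw [hsurp]; linarith [hQle]

theorem pvi_clipped_value_bound
    {S A : Type} [Fintype S] [Nonempty S] [Fintype A] [Nonempty A]
    (M : TabMDP S A) (Phat : ℕ → S → A → S → ℝ) (b : ℕ → S → A → ℝ)
    (πg : ℕ → S → A)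
    (hgreedy : ∀ h s, TabMDP.Vhat M Phat b h s = TabMDP.Qhat M Phat b h s (πg h s))
    (ε : ℝ) (hε : 0 ≤ ε)
    (hunder : ∀ h s, 1 ≤ h → h ≤ M.H + 1 →
      TabMDP.Vhat M Phat b h s ≤ TabMDP.V M πg h s)
    (πst : ℕ → S → A) (hopt : ∀ h s, TabMDP.V M πst h s = TabMDP.Vstar M h s) :
    ∀ h s, 1 ≤ h → h ≤ M.H + 1 →
      TabMDP.Vclip M πst (fun h' s' a' => clip (TabMDP.surplus M Phat b h' s' a') ε) h s ≤
          TabMDP.Vhat M Phat b h s + ((M.H : ℝ) - h + 1) * ε ∧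
        TabMDP.Vhat M Phat b h s + ((M.H : ℝ) - h + 1) * ε ≤
          TabMDP.V M πg h s + ((M.H : ℝ) - h + 1) * ε := by
  intro h s h1 h2
  constructor
  · have hn : h + (M.H + 1 - h) = M.H + 1 := by omega
    have := vclip_aux M Phat b πst ε hε (M.H + 1 - h) h s hn
    have heq : ((M.H : ℝ) - h + 1) = ((M.H + 1 - h : ℕ) : ℝ) := by
      have : (M.H + 1 - h : ℕ) = M.H + 1 - h := rfl
      push_cast [Nat.cast_sub (by omega : h ≤ M.H + 1)]
      ring
    rw [TabMDP.Vclip, TabMDP.Vhat, heq]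
    exact this
  · exact add_le_add_left (hunder h s h1 h2) _
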